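/- Let R ⊆ S be an extension of commutative Noetherian domains such that S is flat as an R-module, and let K = Frac(R) ⊆ L = Frac(S). For every nonzero ideal I of R, the reflexive closure of the extended ideal equals the extension of the reflexive closure: ((IS)⁻¹)⁻¹ = ((I⁻¹)⁻¹)·S, where ((I⁻¹)⁻¹)·S denotes the S-submodule of L generated by the image of (I⁻¹)⁻¹ ⊆ K. -/

import Mathlib

open TensorProduct in
lemma ker_matrix_map_span {R S : Type} [CommRing R] [CommRing S] [Algebra R S]
    [Module.Flat R S] {ι ι' : Type} [Fintype ι] [Fintype ι'] [DecidableEq ι]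
    (A : Matrix ι' ι R) :
    LinearMap.ker (Matrix.mulVecLin (A.map (algebraMap R S))) =
      Submodule.span S ((fun r i => algebraMap R S (r i)) ''
        ((LinearMap.ker A.mulVecLin : Submodule R (ι → R)) : Set (ι → R))) := by
  classical
  have key : ∀ y : S ⊗[R] (ι → R),
      Matrix.mulVecLin (A.map (algebraMap R S)) (TensorProduct.piScalarRight R S S ι y)
        = TensorProduct.piScalarRightHom R S S ι'
            (TensorProduct.AlgebraTensorModule.lTensor S S A.mulVecLin y) := by
    intro y
    induction y using TensorProduct.induction_on with
    | zero => simp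
    | tmul s r =>
      rw [TensorProduct.piScalarRight_apply, TensorProduct.piScalarRightHom_tmul,
        TensorProduct.AlgebraTensorModule.lTensor_tmul, TensorProduct.piScalarRightHom_tmul]
      funext j
      simp [Matrix.mulVecLin, Matrix.mulVec, dotProduct, Algebra.smul_def,
        Finset.sum_mul, Finset.mul_sum, map_sum, mul_assoc, mul_left_comm, mul_comm]
    | add x y hx hy => simp only [map_add, hx, hy]
  have hz : ∀ z : S ⊗[R] (ι' → R),
      TensorProduct.piScalarRightHom R S S ι' z = 0 ↔ z = 0 := fun z => by
    rw [← TensorProduct.piScalarRight_apply, LinearEquiv.map_eq_zero_iff]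
  have hker : LinearMap.ker (Matrix.mulVecLin (A.map (algebraMap R S)))
      = Submodule.map (TensorProduct.piScalarRight R S S ι : S ⊗[R] (ι → R) →ₗ[S] (ι → S))
          (LinearMap.ker (TensorProduct.AlgebraTensorModule.lTensor S S A.mulVecLin)) := by
    ext x
    rw [Submodule.mem_map_equiv, LinearMap.mem_ker, LinearMap.mem_ker, ← hz]
    rw [← key, LinearEquiv.apply_symm_apply]
  rw [hker, Module.Flat.ker_lTensor_eq, ← LinearMap.range_comp]
  apply le_antisymm
  · rintro x ⟨y, rfl⟩
    induction y using TensorProduct.induction_on with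
    | zero => simp
    | tmul s k =>
      simp only [LinearMap.coe_comp, Function.comp_apply, LinearEquiv.coe_coe,
        TensorProduct.AlgebraTensorModule.lTensor_tmul, TensorProduct.piScalarRight_apply,
        TensorProduct.piScalarRightHom_tmul]
      have : (fun j => (LinearMap.ker A.mulVecLin).subtype k j • s)
          = s • (fun i => algebraMap R S ((k : ι → R) i)) := by
        funext i
        simp [Algebra.smul_def, mul_comm]
      rw [this]
      exact Submodule.smul_mem _ s (Submodule.subset_span ⟨(k : ι → R), k.2, rfl⟩)
    | add a b ha hb =>
      rw [map_add]
      exact Submodule.add_mem _ ha hb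
  · rw [Submodule.span_le]
    rintro _ ⟨r, hr, rfl⟩
    refine ⟨(1 : S) ⊗ₜ ⟨r, hr⟩, ?_⟩
    simp only [LinearMap.coe_comp, Function.comp_apply, LinearEquiv.coe_coe,
      TensorProduct.AlgebraTensorModule.lTensor_tmul, TensorProduct.piScalarRight_apply,
      TensorProduct.piScalarRightHom_tmul]
    funext i
    rw [Algebra.smul_def, mul_one]
    rfl

lemma div_span_extend {R S K L : Type}
    [CommRing R] [IsDomain R]
    [CommRing S] [IsDomain S]
    [Algebra R S] [Module.Flat R S]
    [Field K] [Algebra R K] [IsFractionRing R K]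
    [Field L] [Algebra S L] [IsFractionRing S L]
    [Algebra K L] [Algebra R L] [IsScalarTower R S L] [IsScalarTower R K L]
    (J : Submodule R K) (hJ : J ≠ ⊥) (hfg : J.FG) :
    1 / Submodule.span S (algebraMap K L '' (J : Set K))
      = Submodule.span S (algebraMap K L '' ((1 / J : Submodule R K) : Set K)) := by
  classical
  apply le_antisymm
  · -- hard direction
    intro x hx
    obtain ⟨T, hT⟩ := hfg
    have hd0 := IsLocalization.exist_integer_multiples_of_finite (nonZeroDivisors R)
      (fun t : {t : K // t ∈ T} => (t : K))
    obtain ⟨d, hd⟩ := hd0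
    choose b hb using fun i => RingHom.mem_range.mp (hd i)
    set a : {t : K // t ∈ T} → K := fun t => (t : K) with ha
    have hex : ∃ i, a i ≠ 0 := by
      by_contra h
      push_neg at h
      apply hJ
      rw [← hT, Submodule.span_eq_bot]
      intro y hy
      exact h ⟨y, hy⟩
    obtain ⟨i₀, hi₀⟩ := hex
    have hmem : ∀ i, x * algebraMap K L (a i) ∈ (1 : Submodule S L) := by
      intro i
      refine Submodule.mem_div_iff_forall_mul_mem.mp hx _ ?_
      exact Submodule.subset_span ⟨a i, by rw [← hT]; exact Submodule.subset_span i.2, rfl⟩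
    choose s hs using fun i => Submodule.mem_one.mp (hmem i)
    set A : Matrix ({t : K // t ∈ T} × {t : K // t ∈ T}) {t : K // t ∈ T} R :=
      Matrix.of fun p k => (if k = p.1 then b p.2 else 0) - (if k = p.2 then b p.1 else 0)
      with hA
    have hmul : ∀ {T' : Type} [CommRing T'] (c v : {t : K // t ∈ T} → T')
        (p : {t : K // t ∈ T} × {t : K // t ∈ T}),
        Matrix.mulVec (Matrix.of fun p k =>
          (if k = p.1 then c p.2 else 0) - (if k = p.2 then c p.1 else 0)) v p
          = c p.2 * v p.1 - c p.1 * v p.2 := by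
      intro T' _ c v p
      simp [Matrix.mulVec, dotProduct, sub_mul, ite_mul,
        Finset.sum_sub_distrib, Finset.sum_ite_eq']
    have hAmap : A.map (algebraMap R S) = Matrix.of fun p k =>
        (if k = p.1 then algebraMap R S (b p.2) else 0)
          - (if k = p.2 then algebraMap R S (b p.1) else 0) := by
      ext p k
      simp only [hA, Matrix.map_apply, Matrix.of_apply, map_sub,
        apply_ite (algebraMap R S), map_zero]
    have hb' : ∀ i, algebraMap R L (b i)
        = algebraMap K L (algebraMap R K (d : R)) * algebraMap K L (a i) := by
      intro i
      rw [IsScalarTower.algebraMap_apply R K L, hb i, Algebra.smul_def, map_mul]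
    have hrel : ∀ i j, algebraMap R S (b j) * s i = algebraMap R S (b i) * s j := by
      intro i j
      apply IsFractionRing.injective S L
      rw [map_mul, map_mul, hs i, hs j, ← IsScalarTower.algebraMap_apply R S L,
        ← IsScalarTower.algebraMap_apply R S L, hb' i, hb' j]
      ring
    have hsker : s ∈ LinearMap.ker (Matrix.mulVecLin (A.map (algebraMap R S))) := by
      rw [LinearMap.mem_ker]
      funext p
      rw [Matrix.mulVecLin_apply, hAmap,
        hmul (fun i => algebraMap R S (b i)) s p, hrel p.1 p.2, sub_self]
      rfl
    rw [ker_matrix_map_span A] at hsker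
    have ha₀ : algebraMap K L (a i₀) ≠ 0 :=
      fun h => hi₀ ((map_eq_zero_iff _ (algebraMap K L).injective).mp h)
    set θ : ({t : K // t ∈ T} → S) →ₗ[S] L :=
      { toFun := fun t => algebraMap S L (t i₀) * (algebraMap K L (a i₀))⁻¹
        map_add' := fun u v => by simp [add_mul]
        map_smul' := fun c t => by simp [Algebra.smul_def, mul_assoc] } with hθ
    have hθs : θ s = x := by
      simp only [hθ, LinearMap.coe_mk, AddHom.coe_mk]
      rw [hs i₀, mul_assoc, mul_inv_cancel₀ ha₀, mul_one]
    have hgen : ∀ r ∈ LinearMap.ker A.mulVecLin,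
        θ (fun i => algebraMap R S (r i))
          ∈ algebraMap K L '' ((1 / J : Submodule R K) : Set K) := by
      intro r hr
      have had : algebraMap R K (d : R) ≠ 0 :=
        IsFractionRing.to_map_ne_zero_of_mem_nonZeroDivisors d.2
      have hrelR : ∀ i, b i₀ * r i = b i * r i₀ := by
        intro i
        have h2 := congrFun (LinearMap.mem_ker.mp hr) (i, i₀)
        rw [Matrix.mulVecLin_apply, hA, hmul] at h2
        exact sub_eq_zero.mp h2
      have hgen2 : ∀ i, algebraMap R K (r i₀) * (a i₀)⁻¹ * a i = algebraMap R K (r i) := by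
        intro i
        rw [mul_comm (algebraMap R K (r i₀)) (a i₀)⁻¹, mul_assoc,
          inv_mul_eq_iff_eq_mul₀ hi₀]
        apply mul_left_cancel₀ had
        calc algebraMap R K (d : R) * (algebraMap R K (r i₀) * a i)
            = (algebraMap R K (d : R) * a i) * algebraMap R K (r i₀) := by ring
          _ = algebraMap R K (b i) * algebraMap R K (r i₀) := by
              rw [hb i, Algebra.smul_def]
          _ = algebraMap R K (b i * r i₀) := by rw [map_mul]
          _ = algebraMap R K (b i₀ * r i) := by rw [← hrelR i]
          _ = (algebraMap R K (d : R) * a i₀) * algebraMap R K (r i) := by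
              rw [map_mul, hb i₀, Algebra.smul_def]
          _ = algebraMap R K (d : R) * (a i₀ * algebraMap R K (r i)) := by ring
      refine ⟨algebraMap R K (r i₀) * (a i₀)⁻¹, ?_, ?_⟩
      · rw [SetLike.mem_coe, Submodule.mem_div_iff_forall_mul_mem]
        intro y hy
        rw [← hT] at hy
        induction hy using Submodule.span_induction with
        | mem y hy =>
          rw [show y = a ⟨y, hy⟩ from rfl, hgen2 ⟨y, hy⟩]
          exact Submodule.mem_one.mpr ⟨_, rfl⟩
        | zero => simp
        | add y z _ _ hy hz => rw [mul_add]; exact Submodule.add_mem _ hy hz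
        | smul t y _ hy =>
          rw [Algebra.smul_def, mul_left_comm, ← Algebra.smul_def]
          exact Submodule.smul_mem _ t hy
      · simp only [hθ, LinearMap.coe_mk, AddHom.coe_mk]
        rw [map_mul, map_inv₀, ← IsScalarTower.algebraMap_apply R K L,
          IsScalarTower.algebraMap_apply R S L]
    have hx' : x ∈ Submodule.map θ (Submodule.span S
        ((fun (r : {t : K // t ∈ T} → R) (i : {t : K // t ∈ T}) => algebraMap R S (r i)) ''
          ((LinearMap.ker A.mulVecLin : Submodule R ({t : K // t ∈ T} → R))
            : Set ({t : K // t ∈ T} → R)))) := ⟨s, hsker, hθs⟩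
    rw [Submodule.map_span] at hx'
    refine Submodule.span_le.mpr ?_ hx'
    rintro _ ⟨_, ⟨r, hr, rfl⟩, rfl⟩
    exact Submodule.subset_span (hgen r hr)
  · -- easy direction
    rw [Submodule.span_le]
    rintro _ ⟨q, hq, rfl⟩
    rw [SetLike.mem_coe, Submodule.mem_div_iff_forall_mul_mem]
    intro y hy
    induction hy using Submodule.span_induction with
    | mem y hy =>
      obtain ⟨a, ha, rfl⟩ := hy
      rw [← map_mul]
      obtain ⟨r, hr⟩ := Submodule.mem_one.mp
        (Submodule.mem_div_iff_forall_mul_mem.mp hq a ha)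
      rw [← hr, ← IsScalarTower.algebraMap_apply R K L,
        IsScalarTower.algebraMap_apply R S L]
      exact Submodule.mem_one.mpr ⟨_, rfl⟩
    | zero => simp
    | add y z _ _ hy hz => rw [mul_add]; exact Submodule.add_mem _ hy hz
    | smul t y _ hy =>
      rw [Algebra.smul_def, mul_left_comm, ← Algebra.smul_def]
      exact Submodule.smul_mem _ t hy

/-- Let `R ⊆ S` be an extension of commutative Noetherian domains with `S` flat over `R`, and
`K = Frac(R) ⊆ L = Frac(S)`. For every nonzero ideal `I` of `R`, the reflexive closure of the
extended ideal equals the extension of the reflexive closure: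
`((IS)⁻¹)⁻¹ = ((I⁻¹)⁻¹)·S` inside `L`, where for a submodule `J` of the fraction field the
inverse `J⁻¹` is formalized as the submodule quotient `1 / J`. -/
theorem stmt2 (R S K L : Type)
    [CommRing R] [IsDomain R] [IsNoetherianRing R]
    [CommRing S] [IsDomain S] [IsNoetherianRing S]
    [Algebra R S] (hRS : Function.Injective (algebraMap R S)) [Module.Flat R S]
    [Field K] [Algebra R K] [IsFractionRing R K]
    [Field L] [Algebra S L] [IsFractionRing S L]
    [Algebra K L] [Algebra R L] [IsScalarTower R S L] [IsScalarTower R K L]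
    (I : Ideal R) (hI : I ≠ ⊥) :
    1 / (1 / (Submodule.map (Algebra.linearMap S L) (I.map (algebraMap R S))))
      = Submodule.span S ((algebraMap K L) ''
          ((1 / (1 / (Submodule.map (Algebra.linearMap R K) I)) : Submodule R K) : Set K)) := by
  have injRK : Function.Injective (algebraMap R K) := IsFractionRing.injective R K
  haveI : NoZeroSMulDivisors R K := ⟨fun {c x} h => by
    rw [Algebra.smul_def, mul_eq_zero] at h
    exact h.imp_left (fun h' => injRK (by rw [h', map_zero]))⟩
  set J : Submodule R K := Submodule.map (Algebra.linearMap R K) I with hJdef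
  have hJfg : J.FG := (IsNoetherian.noetherian I).map _
  have hJne : J ≠ ⊥ := by
    intro h
    apply hI
    apply Submodule.map_injective_of_injective
      (show Function.Injective (Algebra.linearMap R K) from injRK)
    rw [Submodule.map_bot]; exact h
  have hext : Submodule.map (Algebra.linearMap S L) (I.map (algebraMap R S))
      = Submodule.span S (algebraMap K L '' (J : Set K)) := by
    have h1 : I.map (algebraMap R S) = Submodule.span S ((algebraMap R S) '' (I : Set R)) := by
      conv_lhs => rw [← Ideal.span_eq I]
      rw [Ideal.map_span]
    rw [h1, Submodule.map_span, hJdef, Submodule.map_coe]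
    congr 1
    rw [Set.image_image, Set.image_image]
    simp only [Algebra.linearMap_apply, ← IsScalarTower.algebraMap_apply]
  have hJfrac : IsFractional (nonZeroDivisors R) J :=
    FractionalIdeal.isFractional_of_fg hJfg
  have hone : IsFractional (nonZeroDivisors R) (1 : Submodule R K) :=
    FractionalIdeal.coe_one (S := nonZeroDivisors R) (P := K) ▸
      (1 : FractionalIdeal (nonZeroDivisors R) K).isFractional
  have hdivfrac : IsFractional (nonZeroDivisors R) (1 / J : Submodule R K) :=
    IsFractional.div_of_nonzero hone hJfrac hJne
  have hdivfg : (1 / J : Submodule R K).FG :=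
    FractionalIdeal.fg_of_isNoetherianRing le_rfl
      (⟨1 / J, hdivfrac⟩ : FractionalIdeal (nonZeroDivisors R) K)
  have hdivne : (1 / J : Submodule R K) ≠ ⊥ := by
    obtain ⟨dd, hdd1, hdd2⟩ := hJfrac
    intro h
    have hd : algebraMap R K dd ∈ (1 / J : Submodule R K) := by
      rw [Submodule.mem_div_iff_forall_mul_mem]
      intro y hy
      obtain ⟨c, hc⟩ := hdd2 y hy
      exact Submodule.mem_one.mpr ⟨c, by rw [hc, Algebra.smul_def]⟩
    rw [h] at hd
    exact IsFractionRing.to_map_ne_zero_of_mem_nonZeroDivisors (K := K) hdd1 (by simpa using hd)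
  rw [hext, div_span_extend J hJne hJfg, div_span_extend (1 / J : Submodule R K) hdivne hdivfg]
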